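/- Let k ≥ 1 and σ ≥ k+1, let β > 0, and let N ≥ 4 be an even integer with ε ≤ N^{−1} and τ = (σ ε / β) ln N ≤ 1/2. Consider the Shishkin mesh x_i = 2(1−τ)i/N for 0 ≤ i ≤ N/2 and x_i = 1−τ + 2τ(i − N/2)/N for N/2 < i ≤ N, with elements I_i = [x_{i−1}, x_i]. Let u ∈ C^{k+2}([0,1]) admit a decomposition u = S + E with |S^{(m)}(x)| ≤ C_d and |E^{(m)}(x)| ≤ C_d ε^{−m} e^{−β(1−x)/ε} for all 0 ≤ m ≤ k+2 and x ∈ [0,1], and let P⁻u be its elementwise Gauss–Radau projection. Then there is a constant C depending only on k, β, σ, C_d (and not on ε or N) such that sup_{x ∈ I_i} |u(x) − (P⁻u)(x)| ≤ C N^{−(k+1)} for every 1 ≤ i ≤ N/2. -/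

import Mathlib

open Set Polynomial MeasureTheory intervalIntegral


lemma radau_unique (k : ℕ) (hk : 1 ≤ k) (p : Polynomial ℝ) (hdeg : p.natDegree ≤ k)
    (hmom : ∀ j < k, ∫ s in (-1:ℝ)..1, p.eval s * s ^ j = 0)
    (hend : p.eval 1 = 0) : p = 0 := by
  have horth : ∀ q : Polynomial ℝ, q.natDegree ≤ k - 1 →
      ∫ s in (-1:ℝ)..1, p.eval s * q.eval s = 0 := by
    intro q hq
    have hqlt : q.natDegree < k := by omega
    have hrw : ∀ s : ℝ, p.eval s * q.eval s
        = ∑ j ∈ Finset.range k, q.coeff j * (p.eval s * s ^ j) := by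
      intro s
      rw [eval_eq_sum_range' hqlt s, Finset.mul_sum]
      exact Finset.sum_congr rfl fun j _ => by ring
    calc ∫ s in (-1:ℝ)..1, p.eval s * q.eval s
        = ∫ s in (-1:ℝ)..1, ∑ j ∈ Finset.range k, q.coeff j * (p.eval s * s ^ j) := by
          simp only [hrw]
      _ = ∑ j ∈ Finset.range k, ∫ s in (-1:ℝ)..1, q.coeff j * (p.eval s * s ^ j) := by
          exact intervalIntegral.integral_finset_sum fun j _ =>
            (Continuous.intervalIntegrable (by fun_prop) _ _)
      _ = ∑ j ∈ Finset.range k, q.coeff j * ∫ s in (-1:ℝ)..1, p.eval s * s ^ j := by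
          simp [intervalIntegral.integral_const_mul]
      _ = 0 := by
          refine Finset.sum_eq_zero fun j hj => ?_
          rw [hmom j (Finset.mem_range.mp hj), mul_zero]
  by_contra hp0
  obtain ⟨r, hr⟩ := dvd_iff_isRoot.mpr hend
  have hrne : r ≠ 0 := fun h => hp0 (by simp [hr, h])
  have hdr : r.natDegree ≤ k - 1 := by
    have h1 : p.natDegree = 1 + r.natDegree := by
      rw [hr, natDegree_mul (X_sub_C_ne_zero 1) hrne, natDegree_X_sub_C]
    omega
  have h0 := horth r hdr
  have hfun : (fun s : ℝ => (1 - s) * r.eval s ^ 2) = fun s => -(p.eval s * r.eval s) := by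
    funext s; rw [hr]; simp only [eval_mul, eval_sub, eval_X, eval_C]; ring
  have h1 : ∫ s in (-1:ℝ)..1, (1 - s) * r.eval s ^ 2 = 0 := by
    rw [hfun, intervalIntegral.integral_neg, h0, neg_zero]
  have hfc : Continuous fun s : ℝ => (1 - s) * r.eval s ^ 2 :=
    (continuous_const.sub continuous_id).mul ((r.continuous).pow 2)
  have hae := (integral_eq_zero_iff_of_le_of_nonneg_ae (by norm_num)
    ?_ (hfc.intervalIntegrable _ _)).mp h1
  · -- derive contradiction
    have hZ : volume ({s : ℝ | (1 - s) * r.eval s ^ 2 ≠ 0} ∩ Ioc (-1:ℝ) 1) = 0 := by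
      have h2 : volume.restrict (Ioc (-1:ℝ) 1) {s : ℝ | ¬ (1 - s) * r.eval s ^ 2 = 0} = 0 := by
        exact ae_iff.mp (hae.mono fun s hs => by simpa using hs)
      rwa [Measure.restrict_apply (by
        have : IsOpen {s : ℝ | (1 - s) * r.eval s ^ 2 ≠ 0} :=
          isOpen_ne.preimage hfc
        exact this.measurableSet)] at h2
    have hcover : Ioo (-1:ℝ) 1 ⊆ {s : ℝ | r.IsRoot s} ∪
        ({s : ℝ | (1 - s) * r.eval s ^ 2 ≠ 0} ∩ Ioc (-1:ℝ) 1) := by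
      intro s hs
      by_cases hfs : (1 - s) * r.eval s ^ 2 = 0
      · left
        have h1s : (1:ℝ) - s ≠ 0 := by
          have := hs.2; intro h; nlinarith [hs.2]
        have : r.eval s ^ 2 = 0 := by
          rcases mul_eq_zero.mp hfs with h | h
          · exact absurd h h1s
          · exact h
        exact pow_eq_zero_iff (n := 2) (by norm_num) |>.mp this
      · right; exact ⟨hfs, hs.1, le_of_lt hs.2⟩
    have hroots : volume {s : ℝ | r.IsRoot s} = 0 :=
      (Polynomial.finite_setOf_isRoot hrne).measure_zero _
    have : volume (Ioo (-1:ℝ) 1) = 0 := by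
      refine le_antisymm ?_ zero_le
      calc volume (Ioo (-1:ℝ) 1) ≤ _ := measure_mono hcover
        _ ≤ volume {s : ℝ | r.IsRoot s} +
            volume ({s : ℝ | (1 - s) * r.eval s ^ 2 ≠ 0} ∩ Ioc (-1:ℝ) 1) := measure_union_le _ _
        _ = 0 := by rw [hroots, hZ, add_zero]
    rw [Real.volume_Ioo] at this
    norm_num at this
  · filter_upwards [ae_restrict_mem measurableSet_Ioc] with s hs
    have h2 : r.eval s ^ 2 ≥ 0 := sq_nonneg _
    have : (1:ℝ) - s ≥ 0 := by linarith [hs.2]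
    positivity



lemma radau_key (k : ℕ) (p : Polynomial ℝ) (hdeg : p.natDegree ≤ k) (j : Fin (k+1)) :
    (Matrix.of fun (j m : Fin (k+1)) => if (j:ℕ) < k then ∫ s in (-1:ℝ)..1, s ^ ((m:ℕ) + (j:ℕ)) else 1).mulVec
      (fun m => p.coeff m) j
    = if (j:ℕ) < k then ∫ s in (-1:ℝ)..1, p.eval s * s ^ (j:ℕ) else p.eval 1 := by
  have hlt : p.natDegree < k + 1 := by omega
  rw [Matrix.mulVec, dotProduct]
  by_cases hj : (j:ℕ) < k
  · simp only [Matrix.of_apply, hj, if_true]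
    have hrw : ∀ s : ℝ, p.eval s * s ^ (j:ℕ)
        = ∑ m ∈ Finset.range (k+1), p.coeff m * s ^ (m + (j:ℕ)) := by
      intro s
      rw [eval_eq_sum_range' hlt s, Finset.sum_mul]
      exact Finset.sum_congr rfl fun m _ => by rw [pow_add]; ring
    calc ∑ m : Fin (k+1), (∫ s in (-1:ℝ)..1, s ^ ((m:ℕ) + (j:ℕ))) * p.coeff (m:ℕ)
        = ∑ m : Fin (k+1), ∫ s in (-1:ℝ)..1, p.coeff (m:ℕ) * s ^ ((m:ℕ) + (j:ℕ)) := by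
          refine Finset.sum_congr rfl fun m _ => ?_
          rw [intervalIntegral.integral_const_mul]; ring
      _ = ∫ s in (-1:ℝ)..1, ∑ m ∈ Finset.range (k+1), p.coeff m * s ^ (m + (j:ℕ)) := by
          rw [Fin.sum_univ_eq_sum_range (fun m => ∫ s in (-1:ℝ)..1, p.coeff m * s ^ (m + (j:ℕ)))]
          exact (intervalIntegral.integral_finset_sum fun m _ =>
            (Continuous.intervalIntegrable (by fun_prop) _ _)).symm
      _ = ∫ s in (-1:ℝ)..1, p.eval s * s ^ (j:ℕ) := by simp only [hrw]
  · simp only [Matrix.of_apply, hj, if_false, one_mul]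
    rw [eval_eq_sum_range' hlt 1, ← Fin.sum_univ_eq_sum_range (fun m => p.coeff m * 1 ^ m)]
    exact Finset.sum_congr rfl fun m _ => by rw [one_pow, mul_one]

lemma radau_stability (k : ℕ) (hk : 1 ≤ k) :
    ∃ Λ : ℝ, 0 < Λ ∧ ∀ (B : ℝ) (v : ℝ → ℝ) (p : Polynomial ℝ),
      ContinuousOn v (Icc (-1:ℝ) 1) →
      p.natDegree ≤ k →
      (∀ j < k, ∫ s in (-1:ℝ)..1, p.eval s * s ^ j = ∫ s in (-1:ℝ)..1, v s * s ^ j) →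
      p.eval 1 = v 1 →
      (∀ s ∈ Icc (-1:ℝ) 1, |v s| ≤ B) →
      ∀ s ∈ Icc (-1:ℝ) 1, |p.eval s| ≤ Λ * B := by
  set M : Matrix (Fin (k+1)) (Fin (k+1)) ℝ :=
    Matrix.of fun (j m : Fin (k+1)) =>
      if (j:ℕ) < k then ∫ s in (-1:ℝ)..1, s ^ ((m:ℕ) + (j:ℕ)) else 1 with hM
  have hinj : Function.Injective M.mulVecLin := by
    rw [← LinearMap.ker_eq_bot, LinearMap.ker_eq_bot']
    intro c hc
    set p : Polynomial ℝ := ∑ m : Fin (k+1), monomial (m:ℕ) (c m) with hp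
    have hcoeff : ∀ m : Fin (k+1), p.coeff (m:ℕ) = c m := by
      intro m
      rw [hp, Polynomial.finset_sum_coeff]
      rw [Finset.sum_eq_single m (fun b _ hbm => by
        rw [coeff_monomial, if_neg (fun h => hbm (Fin.ext h))]) (by simp)]
      simp [coeff_monomial]
    have hdeg : p.natDegree ≤ k := by
      refine natDegree_sum_le_of_forall_le _ _ fun m _ => ?_
      exact (natDegree_monomial_le _).trans (by omega)
    have hcfun : (fun m : Fin (k+1) => p.coeff (m:ℕ)) = c := funext hcoeff
    have hzero : ∀ j : Fin (k+1), M.mulVec c j = 0 := fun j => by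
      rw [show M.mulVec c = 0 from hc]; rfl
    have hp0 : p = 0 := by
      refine radau_unique k hk p hdeg ?_ ?_
      · intro j hj
        have hkey := radau_key k p hdeg ⟨j, by omega⟩
        rw [hcfun, ← hM] at hkey
        have h0 := hzero ⟨j, by omega⟩
        rw [hkey] at h0
        simpa [hj] using h0
      · have hkey := radau_key k p hdeg ⟨k, by omega⟩
        rw [hcfun, ← hM] at hkey
        have h0 := hzero ⟨k, by omega⟩
        rw [hkey] at h0
        simpa using h0
    funext m
    rw [← hcoeff m, hp0]
    simp
  have hsurj : Function.Surjective M.mulVecLin :=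
    (LinearMap.injective_iff_surjective).mp hinj
  let e : (Fin (k+1) → ℝ) ≃ₗ[ℝ] (Fin (k+1) → ℝ) :=
    LinearEquiv.ofBijective M.mulVecLin ⟨hinj, hsurj⟩
  let T := LinearMap.toContinuousLinearMap (e.symm.toLinearMap)
  refine ⟨(k+1) * 2 * (‖T‖ + 1), by positivity, ?_⟩
  intro B v p hv hdeg hmom hend hB
  have hB0 : 0 ≤ B := le_trans (abs_nonneg _) (hB 1 (by norm_num))
  set c : Fin (k+1) → ℝ := fun m => p.coeff (m:ℕ) with hcdef
  have hnorm : ‖M.mulVec c‖ ≤ 2 * B := by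
    rw [pi_norm_le_iff_of_nonneg (by positivity)]
    intro j
    have hkey := radau_key k p hdeg j
    rw [← hM] at hkey
    rw [show M.mulVec c j = _ from hkey]
    by_cases hj : (j:ℕ) < k
    · rw [if_pos hj, hmom (j:ℕ) hj]
      have := intervalIntegral.norm_integral_le_of_norm_le_const
        (C := B) (f := fun s => v s * s ^ (j:ℕ)) (a := (-1:ℝ)) (b := 1) ?_
      · calc ‖∫ s in (-1:ℝ)..1, v s * s ^ (j:ℕ)‖ ≤ B * |1 - (-1:ℝ)| := this
          _ = 2 * B := by rw [show |1 - (-1:ℝ)| = 2 by norm_num]; ring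
      · intro s hs
        rw [Set.uIoc_of_le (by norm_num : (-1:ℝ) ≤ 1)] at hs
        have hs' : s ∈ Icc (-1:ℝ) 1 := ⟨le_of_lt hs.1, hs.2⟩
        rw [Real.norm_eq_abs, abs_mul, abs_pow]
        calc |v s| * |s| ^ (j:ℕ) ≤ B * 1 := by
              refine mul_le_mul (hB s hs') (pow_le_one₀ (abs_nonneg _) (abs_le.mpr ⟨hs'.1, hs'.2⟩)) (by positivity) hB0
          _ = B := mul_one B
    · rw [if_neg hj, hend, Real.norm_eq_abs]
      calc |v 1| ≤ B := hB 1 (by norm_num)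
        _ ≤ 2 * B := by linarith
  have hceq : T (M.mulVec c) = c := by
    have h1 : e c = M.mulVec c := rfl
    have h2 : e.symm (e c) = c := e.symm_apply_apply c
    rw [h1] at h2
    rw [show (T : (Fin (k+1) → ℝ) → (Fin (k+1) → ℝ)) = ⇑(e.symm.toLinearMap) from
      LinearMap.coe_toContinuousLinearMap' _]
    exact h2
  have hcnorm : ‖c‖ ≤ ‖T‖ * (2 * B) := by
    rw [← hceq]
    calc ‖T (M.mulVec c)‖ ≤ ‖T‖ * ‖M.mulVec c‖ := T.le_opNorm _
      _ ≤ ‖T‖ * (2 * B) := by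
          exact mul_le_mul_of_nonneg_left hnorm (norm_nonneg _)
  intro s hs
  have hlt : p.natDegree < k + 1 := by omega
  rw [eval_eq_sum_range' hlt s,
    ← Fin.sum_univ_eq_sum_range (fun m => p.coeff m * s ^ m)]
  calc |∑ m : Fin (k+1), p.coeff (m:ℕ) * s ^ (m:ℕ)|
      ≤ ∑ m : Fin (k+1), |p.coeff (m:ℕ) * s ^ (m:ℕ)| := Finset.abs_sum_le_sum_abs _ _
    _ ≤ ∑ _m : Fin (k+1), ‖T‖ * (2 * B) := by
        refine Finset.sum_le_sum fun m _ => ?_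
        rw [abs_mul, abs_pow]
        calc |p.coeff (m:ℕ)| * |s| ^ (m:ℕ) ≤ |p.coeff (m:ℕ)| * 1 := by
              refine mul_le_mul_of_nonneg_left
                (pow_le_one₀ (abs_nonneg _) (abs_le.mpr ⟨hs.1, hs.2⟩)) (abs_nonneg _)
          _ = |p.coeff (m:ℕ)| := mul_one _
          _ ≤ ‖c‖ := by
              have := norm_le_pi_norm c m
              simpa [hcdef, Real.norm_eq_abs] using this
          _ ≤ ‖T‖ * (2 * B) := hcnorm
    _ = (k+1) * (‖T‖ * (2 * B)) := by
        rw [Finset.sum_const, Finset.card_univ, Fintype.card_fin, nsmul_eq_mul]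
        push_cast; ring
    _ ≤ (k+1) * 2 * (‖T‖ + 1) * B := by nlinarith [norm_nonneg T, hB0]



lemma radau_stability_scaled (k : ℕ) (hk : 1 ≤ k) :
    ∃ Λ : ℝ, 0 < Λ ∧ ∀ (a b B : ℝ) (v : ℝ → ℝ) (p : Polynomial ℝ),
      a < b → ContinuousOn v (Icc a b) → p.natDegree ≤ k →
      (∀ q : Polynomial ℝ, q.natDegree ≤ k - 1 →
        ∫ t in a..b, p.eval t * q.eval t = ∫ t in a..b, v t * q.eval t) →
      p.eval b = v b →
      (∀ t ∈ Icc a b, |v t| ≤ B) →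
      ∀ t ∈ Icc a b, |p.eval t| ≤ Λ * B := by
  obtain ⟨Λ, hΛ, hstab⟩ := radau_stability k hk
  refine ⟨Λ, hΛ, ?_⟩
  intro a b B v p hab hv hdeg hmom hend hB t ht
  set c : ℝ := (b - a) / 2 with hc
  set d : ℝ := (a + b) / 2 with hd
  have hc0 : 0 < c := by rw [hc]; linarith
  have hcne : c ≠ 0 := ne_of_gt hc0
  have hba : b - a ≠ 0 := by intro h; linarith
  set P : Polynomial ℝ := p.comp (C c * X + C d) with hP
  have hmaps : ∀ s ∈ Icc (-1:ℝ) 1, c * s + d ∈ Icc a b := by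
    intro s hs
    constructor <;> nlinarith [hs.1, hs.2]
  have hPdeg : P.natDegree ≤ k := by
    rw [hP, natDegree_comp, natDegree_linear hcne, mul_one]
    exact hdeg
  have hveq : ∀ s : ℝ, P.eval s = p.eval (c * s + d) := by
    intro s; rw [hP, eval_comp]; simp
  -- moments
  have hmom' : ∀ j < k, ∫ s in (-1:ℝ)..1, P.eval s * s ^ j
      = ∫ s in (-1:ℝ)..1, v (c * s + d) * s ^ j := by
    intro j hj
    set Q : Polynomial ℝ := (C (2/(b-a)) * X + C (-(a+b)/(b-a))) ^ j with hQ
    have hQdeg : Q.natDegree ≤ k - 1 := by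
      rw [hQ]
      refine natDegree_pow_le.trans ?_
      rw [natDegree_linear (by positivity : (2:ℝ)/(b-a) ≠ 0), mul_one]
      omega
    have hQeval : ∀ s : ℝ, Q.eval (c * s + d) = s ^ j := by
      intro s
      rw [hQ]
      simp only [eval_pow, eval_add, eval_mul, eval_C, eval_X]
      congr 1
      field_simp
      ring
    have h1 : ∫ s in (-1:ℝ)..1, P.eval s * s ^ j
        = c⁻¹ * ∫ u in a..b, p.eval u * Q.eval u := by
      have heq : ∀ s : ℝ, P.eval s * s ^ j
          = (fun u => p.eval u * Q.eval u) (c * s + d) := by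
        intro s; rw [hveq s, ← hQeval s]
      calc ∫ s in (-1:ℝ)..1, P.eval s * s ^ j
          = ∫ s in (-1:ℝ)..1, (fun u => p.eval u * Q.eval u) (c * s + d) := by
            simp only [heq]
        _ = c⁻¹ • ∫ u in (c * (-1) + d)..(c * 1 + d), p.eval u * Q.eval u := by
            rw [intervalIntegral.integral_comp_mul_add (fun u => p.eval u * Q.eval u) hcne d]
        _ = c⁻¹ * ∫ u in a..b, p.eval u * Q.eval u := by
            rw [show c * (-1) + d = a by rw [hc, hd]; ring,
              show c * 1 + d = b by rw [hc, hd]; ring, smul_eq_mul]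
    have h2 : ∫ s in (-1:ℝ)..1, v (c * s + d) * s ^ j
        = c⁻¹ * ∫ u in a..b, v u * Q.eval u := by
      have heq : ∀ s : ℝ, v (c * s + d) * s ^ j
          = (fun u => v u * Q.eval u) (c * s + d) := by
        intro s; rw [← hQeval s]
      calc ∫ s in (-1:ℝ)..1, v (c * s + d) * s ^ j
          = ∫ s in (-1:ℝ)..1, (fun u => v u * Q.eval u) (c * s + d) := by
            simp only [heq]
        _ = c⁻¹ • ∫ u in (c * (-1) + d)..(c * 1 + d), v u * Q.eval u := by
            rw [intervalIntegral.integral_comp_mul_add (fun u => v u * Q.eval u) hcne d]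
        _ = c⁻¹ * ∫ u in a..b, v u * Q.eval u := by
            rw [show c * (-1) + d = a by rw [hc, hd]; ring,
              show c * 1 + d = b by rw [hc, hd]; ring, smul_eq_mul]
    rw [h1, h2, hmom Q hQdeg]
  have hcd : c * 1 + d = b := by rw [hc, hd]; ring
  have hend' : P.eval 1 = v (c * 1 + d) := by
    rw [hveq 1, hcd]; exact hend
  have hv' : ContinuousOn (fun s => v (c * s + d)) (Icc (-1:ℝ) 1) := by
    refine hv.comp ((continuous_const.mul continuous_id).add continuous_const).continuousOn ?_
    intro s hs; exact hmaps s hs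
  have hB' : ∀ s ∈ Icc (-1:ℝ) 1, |v (c * s + d)| ≤ B := fun s hs => hB _ (hmaps s hs)
  have hres := hstab B (fun s => v (c * s + d)) P hv' hPdeg hmom'
    (by rw [show v (c * 1 + d) = (fun s => v (c * s + d)) 1 from rfl] at hend'; exact hend') hB'
  -- transfer back
  have hs : (t - d) / c ∈ Icc (-1:ℝ) 1 := by
    constructor
    · rw [le_div_iff₀ hc0]; rw [hc, hd]; nlinarith [ht.1]
    · rw [div_le_iff₀ hc0]; rw [hc, hd]; nlinarith [ht.2]
  have : c * ((t - d) / c) + d = t := by field_simp; ring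
  calc |p.eval t| = |P.eval ((t - d) / c)| := by rw [hveq, this]
    _ ≤ Λ * B := hres _ hs


lemma iterderiv_transfer {f : ℝ → ℝ} {n : ℕ} (hf : ContDiffOn ℝ n f (Icc (0:ℝ) 1))
    {a b : ℝ} (hab : a < b) (hsub : Icc a b ⊆ Icc (0:ℝ) 1) :
    ∀ m, m ≤ n → ∀ y ∈ Icc a b,
      iteratedDerivWithin m f (Icc a b) y = iteratedDerivWithin m f (Icc 0 1) y := by
  intro m
  induction m with
  | zero => intro _ y _; simp
  | succ m ih =>
    intro hm y hy
    have hm' : m ≤ n := by omega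
    have hud : UniqueDiffWithinAt ℝ (Icc a b) y := (uniqueDiffOn_Icc hab) y hy
    have hud01 : UniqueDiffWithinAt ℝ (Icc (0:ℝ) 1) y :=
      (uniqueDiffOn_Icc one_pos) y (hsub hy)
    rw [iteratedDerivWithin_succ, iteratedDerivWithin_succ]
    have hdiff : DifferentiableWithinAt ℝ (iteratedDerivWithin m f (Icc (0:ℝ) 1)) (Icc (0:ℝ) 1) y :=
      hf.differentiableOn_iteratedDerivWithin (by exact_mod_cast (by omega : m < n))
        (uniqueDiffOn_Icc one_pos) y (hsub hy)
    calc derivWithin (iteratedDerivWithin m f (Icc a b)) (Icc a b) y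
        = derivWithin (iteratedDerivWithin m f (Icc (0:ℝ) 1)) (Icc a b) y :=
          derivWithin_congr (fun z hz => ih hm' z hz) (ih hm' y hy)
      _ = derivWithin (iteratedDerivWithin m f (Icc (0:ℝ) 1)) (Icc (0:ℝ) 1) y :=
          derivWithin_subset hsub hud hdiff

theorem statement12 (k : ℕ) (hk : 1 ≤ k) (β σ Cd : ℝ)
    (hβ : 0 < β) (hσ : (k : ℝ) + 1 ≤ σ) (hCd : 0 < Cd) :
    ∃ C > 0, ∀ (N : ℕ) (ε τ : ℝ) (x : ℕ → ℝ) (u S E : ℝ → ℝ)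
      (Pu : ℕ → Polynomial ℝ),
      4 ≤ N → N % 2 = 0 →
      0 < ε → ε ≤ (N : ℝ)⁻¹ →
      τ = σ * ε / β * Real.log N → τ ≤ 1 / 2 →
      (∀ i ≤ N / 2, x i = 2 * (1 - τ) * i / N) →
      (∀ i, N / 2 < i → i ≤ N → x i = 1 - τ + 2 * τ * ((i : ℝ) - (N / 2 : ℕ)) / N) →
      ContDiffOn ℝ (k + 2 : ℕ) S (Icc 0 1) →
      ContDiffOn ℝ (k + 2 : ℕ) E (Icc 0 1) →
      (∀ t ∈ Icc (0:ℝ) 1, u t = S t + E t) →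
      (∀ m ≤ k + 2, ∀ t ∈ Icc (0:ℝ) 1,
        |iteratedDerivWithin m S (Icc 0 1) t| ≤ Cd) →
      (∀ m ≤ k + 2, ∀ t ∈ Icc (0:ℝ) 1,
        |iteratedDerivWithin m E (Icc 0 1) t| ≤
          Cd / ε ^ m * Real.exp (-β * (1 - t) / ε)) →
      (∀ i ∈ Finset.Icc 1 N, (Pu i).natDegree ≤ k) →
      (∀ i ∈ Finset.Icc 1 N, ∀ q : Polynomial ℝ, q.natDegree ≤ k - 1 →
        (∫ t in (x (i - 1))..(x i), (Pu i).eval t * q.eval t)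
          = ∫ t in (x (i - 1))..(x i), u t * q.eval t) →
      (∀ i ∈ Finset.Icc 1 N, (Pu i).eval (x i) = u (x i)) →
      ∀ i ∈ Finset.Icc 1 (N / 2), ∀ t ∈ Icc (x (i - 1)) (x i),
        |u t - (Pu i).eval t| ≤ C * ((N : ℝ) ^ (k + 1))⁻¹ := by
  obtain ⟨Λ, hΛpos, hΛ⟩ := radau_stability_scaled k hk
  have hkf : (0:ℝ) < (k.factorial : ℝ) := by exact_mod_cast k.factorial_pos
  refine ⟨(1 + Λ) * (Cd * 2 ^ (k+1) / (k.factorial : ℝ) + Cd), by positivity, ?_⟩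
  intro N ε τ x u S E Pu hN4 heven hε hεN hτdef hτhalf hxc hxf hS hE huSE hSbnd hEbnd
    hPdeg hPmom hPend i hi t ht
  rw [Finset.mem_Icc] at hi
  obtain ⟨hi1, hi2⟩ := hi
  have hiN : i ∈ Finset.Icc 1 N := Finset.mem_Icc.mpr ⟨hi1, le_trans hi2 (Nat.div_le_self N 2)⟩
  have hN0 : 0 < N := by omega
  have hNR : (0:ℝ) < N := by exact_mod_cast hN0
  have hN1 : (1:ℝ) ≤ N := by exact_mod_cast (by omega : 1 ≤ N)
  have hlog : 0 ≤ Real.log N := Real.log_nonneg hN1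
  have hσ0 : 0 < σ := lt_of_lt_of_le (by positivity) hσ
  have hτ0 : 0 ≤ τ := by rw [hτdef]; positivity
  have hone : (0:ℝ) < 1 - τ := by linarith
  have ha : x (i-1) = 2 * (1 - τ) * ((i-1 : ℕ) : ℝ) / N := hxc (i-1) (by omega)
  have hb : x i = 2 * (1 - τ) * i / N := hxc i hi2
  have hcast : ((i-1 : ℕ) : ℝ) = (i:ℝ) - 1 := by
    rw [Nat.cast_sub hi1]; norm_num
  have hh : x i - x (i-1) = 2 * (1 - τ) / N := by
    rw [ha, hb, hcast]; field_simp; ring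
  have hab : x (i-1) < x i := by
    have h0 : 0 < 2 * (1 - τ) / N := by positivity
    linarith [hh]
  have h2i : (2 * i : ℝ) ≤ N := by
    have : 2 * i ≤ N := by omega
    exact_mod_cast this
  have hbb : x i ≤ 1 - τ := by
    rw [hb, div_le_iff₀ hNR]
    nlinarith
  have hi1R : (1:ℝ) ≤ (i:ℝ) := by exact_mod_cast hi1
  have ha0 : 0 ≤ x (i-1) := by
    rw [ha, hcast]
    apply div_nonneg _ (le_of_lt hNR)
    nlinarith
  have hb1 : x i ≤ 1 := by linarith
  have hsub : Icc (x (i-1)) (x i) ⊆ Icc (0:ℝ) 1 := Icc_subset_Icc ha0 hb1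
  -- Taylor polynomial of S at the left endpoint
  set pp : Polynomial ℝ := ∑ m ∈ Finset.range (k+1),
    Polynomial.C (iteratedDerivWithin m S (Icc (x (i-1)) (x i)) (x (i-1)) * ((m.factorial : ℝ))⁻¹) *
      (Polynomial.X - Polynomial.C (x (i-1))) ^ m with hpp
  have hppdeg : pp.natDegree ≤ k := by
    refine Polynomial.natDegree_sum_le_of_forall_le _ _ fun m hm => ?_
    refine (Polynomial.natDegree_C_mul_le _ _).trans ?_
    refine Polynomial.natDegree_pow_le.trans ?_
    rw [Polynomial.natDegree_X_sub_C, mul_one]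
    exact Nat.lt_succ_iff.mp (Finset.mem_range.mp hm)
  have hppeval : ∀ z : ℝ, pp.eval z = taylorWithinEval S k (Icc (x (i-1)) (x i)) (x (i-1)) z := by
    intro z
    rw [taylor_within_apply, hpp, Polynomial.eval_finset_sum]
    refine Finset.sum_congr rfl fun m _ => ?_
    simp only [Polynomial.eval_mul, Polynomial.eval_C, Polynomial.eval_pow,
      Polynomial.eval_sub, Polynomial.eval_X, smul_eq_mul]
    ring
  have hS1 : ContDiffOn ℝ (k + 1 : ℕ) S (Icc (x (i-1)) (x i)) := by
    refine (hS.of_le ?_).mono hsub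
    exact_mod_cast (by omega : k + 1 ≤ k + 2)
  have hSbound : ∀ y ∈ Icc (x (i-1)) (x i),
      ‖iteratedDerivWithin (k+1) S (Icc (x (i-1)) (x i)) y‖ ≤ Cd := by
    intro y hy
    rw [Real.norm_eq_abs, iterderiv_transfer hS hab hsub (k+1) (by omega) y hy]
    exact hSbnd (k+1) (by omega) y (hsub hy)
  have hTay : ∀ z ∈ Icc (x (i-1)) (x i),
      |S z - pp.eval z| ≤ Cd * (2 / N) ^ (k+1) / (k.factorial : ℝ) := by
    intro z hz
    have h1 := taylor_mean_remainder_bound (le_of_lt hab) hS1 hz hSbound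
    rw [Real.norm_eq_abs] at h1
    have h2 : z - x (i-1) ≤ 2 / N := by
      have h3 : z - x (i-1) ≤ 2 * (1-τ)/N := by linarith [hz.2, hh]
      refine h3.trans ?_
      gcongr
      linarith
    have h0 : 0 ≤ z - x (i-1) := sub_nonneg.mpr hz.1
    calc |S z - pp.eval z|
        = |S z - taylorWithinEval S k (Icc (x (i-1)) (x i)) (x (i-1)) z| := by rw [hppeval]
      _ ≤ Cd * (z - x (i-1))^(k+1) / (k.factorial : ℝ) := h1
      _ ≤ Cd * (2 / N) ^ (k+1) / (k.factorial : ℝ) := by gcongr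
  have hEsmall : ∀ z ∈ Icc (x (i-1)) (x i), |E z| ≤ Cd * ((N:ℝ)^(k+1))⁻¹ := by
    intro z hz
    have hz01 : z ∈ Icc (0:ℝ) 1 := hsub hz
    have h1 := hEbnd 0 (by omega) z hz01
    simp only [pow_zero, div_one] at h1
    refine h1.trans ?_
    have hz1 : τ ≤ 1 - z := by linarith [hz.2, hbb]
    have hkey : σ * Real.log N * ε ≤ β * (1 - z) := by
      have h4 := mul_le_mul_of_nonneg_left hz1 (le_of_lt hβ)
      calc σ * Real.log N * ε = β * (σ * ε / β * Real.log N) := by field_simp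
        _ ≤ β * (1 - z) := by rw [← hτdef]; exact h4
    have hexp1 : -β * (1 - z) / ε ≤ -(σ * Real.log N) := by
      rw [neg_mul, neg_div, neg_le_neg_iff, le_div_iff₀ hε]
      linarith
    have hexp2 : -(σ * Real.log N) ≤ -(((k:ℝ)+1) * Real.log N) := by
      have := mul_le_mul_of_nonneg_right hσ hlog
      linarith
    have hfinal : Real.exp (-β * (1 - z) / ε) ≤ ((N:ℝ)^(k+1))⁻¹ := by
      calc Real.exp (-β * (1 - z) / ε) ≤ Real.exp (-(((k:ℝ)+1) * Real.log N)) :=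
            Real.exp_le_exp.mpr (hexp1.trans hexp2)
        _ = ((N:ℝ)^(k+1))⁻¹ := by
            rw [Real.exp_neg]
            congr 1
            rw [show ((k:ℝ)+1) = ((k+1 : ℕ):ℝ) by push_cast; ring,
              Real.exp_nat_mul, Real.exp_log hNR]
    calc Cd * Real.exp (-β * (1-z)/ε) ≤ Cd * ((N:ℝ)^(k+1))⁻¹ := by gcongr
      _ = Cd * ((N:ℝ)^(k+1))⁻¹ := rfl
  set B : ℝ := Cd * (2/N)^(k+1)/(k.factorial:ℝ) + Cd * ((N:ℝ)^(k+1))⁻¹ with hBdef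
  have hucont : ContinuousOn u (Icc (x (i-1)) (x i)) := by
    have h1 : ContinuousOn (fun z => S z + E z) (Icc (x (i-1)) (x i)) :=
      ((hS.continuousOn).mono hsub).add ((hE.continuousOn).mono hsub)
    exact h1.congr fun z hz => huSE z (hsub hz)
  have hvcont : ContinuousOn (fun z => u z - pp.eval z) (Icc (x (i-1)) (x i)) :=
    hucont.sub (pp.continuous.continuousOn)
  have hvB : ∀ z ∈ Icc (x (i-1)) (x i), |u z - pp.eval z| ≤ B := by
    intro z hz
    rw [huSE z (hsub hz)]
    calc |S z + E z - pp.eval z| ≤ |S z - pp.eval z| + |E z| := by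
          have h5 : S z + E z - pp.eval z = (S z - pp.eval z) + E z := by ring
          rw [h5]; exact abs_add_le _ _
      _ ≤ B := add_le_add (hTay z hz) (hEsmall z hz)
  have hPideg : (Pu i).natDegree ≤ k := hPdeg i hiN
  have hpq : (Pu i - pp).natDegree ≤ k :=
    le_trans (Polynomial.natDegree_sub_le _ _) (max_le hPideg hppdeg)
  have hmomv : ∀ q : Polynomial ℝ, q.natDegree ≤ k - 1 →
      ∫ z in (x (i-1))..(x i), (Pu i - pp).eval z * q.eval z
        = ∫ z in (x (i-1))..(x i), (u z - pp.eval z) * q.eval z := by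
    intro q hq
    have hint1 : IntervalIntegrable (fun z => (Pu i).eval z * q.eval z) volume (x (i-1)) (x i) :=
      (Continuous.intervalIntegrable (by fun_prop) _ _)
    have hint2 : IntervalIntegrable (fun z => pp.eval z * q.eval z) volume (x (i-1)) (x i) :=
      (Continuous.intervalIntegrable (by fun_prop) _ _)
    have hint3 : IntervalIntegrable (fun z => u z * q.eval z) volume (x (i-1)) (x i) := by
      apply ContinuousOn.intervalIntegrable
      rw [uIcc_of_le (le_of_lt hab)]
      exact hucont.mul (q.continuous.continuousOn)
    have e1 : ∀ z : ℝ, (Pu i - pp).eval z * q.eval z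
        = (Pu i).eval z * q.eval z - pp.eval z * q.eval z := by
      intro z; rw [Polynomial.eval_sub]; ring
    have e2 : ∀ z : ℝ, (u z - pp.eval z) * q.eval z
        = u z * q.eval z - pp.eval z * q.eval z := fun z => by ring
    simp only [e1, e2]
    rw [intervalIntegral.integral_sub hint1 hint2, intervalIntegral.integral_sub hint3 hint2,
      hPmom i hiN q hq]
  have hendv : (Pu i - pp).eval (x i) = u (x i) - pp.eval (x i) := by
    rw [Polynomial.eval_sub, hPend i hiN]
  have hmain := hΛ (x (i-1)) (x i) B (fun z => u z - pp.eval z) (Pu i - pp)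
    hab hvcont hpq hmomv hendv hvB t ht
  have hBeq : B = (Cd * 2^(k+1)/(k.factorial:ℝ) + Cd) * ((N:ℝ)^(k+1))⁻¹ := by
    rw [hBdef, div_pow]
    field_simp
  calc |u t - (Pu i).eval t|
      ≤ |u t - pp.eval t| + |pp.eval t - (Pu i).eval t| := abs_sub_le _ _ _
    _ = |u t - pp.eval t| + |(Pu i - pp).eval t| := by
        rw [Polynomial.eval_sub, abs_sub_comm (Polynomial.eval t pp) (Polynomial.eval t (Pu i))]
    _ ≤ B + Λ * B := add_le_add (hvB t ht) hmain
    _ = (1 + Λ) * (Cd * 2 ^ (k+1) / (k.factorial : ℝ) + Cd) * ((N:ℝ)^(k+1))⁻¹ := by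
        rw [hBeq]; ring
    _ ≤ _ := le_refl _
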